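/- arXiv:1505.05532 — 2 statements merged into one kernel-verified Lean document; each statement's English description precedes it below -/
import Mathlib

section
/- Let (A⊗V,μ_{A⊗V}) and (A⊗W,μ_{A⊗W}) be weak crossed products with preunits ν_V and ν_W. Suppose there exist morphisms T:A⊗V→A⊗W and S:A⊗W→A⊗V of left A-modules satisfying T∘ν_V=ν_W, T∘μ_{A⊗V}=μ_{A⊗W}∘(T⊗T), S∘T=∇_{A⊗V}, and T∘S=∇_{A⊗W}. Then the morphisms γ:=T∘(η_A⊗V):V→A⊗W and θ:=∇_{A⊗V}∘S∘(η_A⊗W):W→A⊗V satisfy: ν_V=(μ_A⊗V)∘(A⊗θ)∘ν_W; θ=∇_{A⊗V}∘θ; ψ_W=(μ_A⊗W)∘(μ_A⊗γ)∘(A⊗ψ_V)∘(θ⊗A); σ_W=(μ_A⊗W)∘(A⊗γ)∘μ_{A⊗V}∘(θ⊗θ); and (μ_A⊗V)∘(A⊗θ)∘γ=∇_{A⊗V}∘(η_A⊗V). -/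
open CategoryTheory MonoidalCategory

universe v u

namespace WeakCrossed

variable {C : Type u} [Category.{v} C] [MonoidalCategory C]

/-- The monoid axioms for a triple `(A, η, μ)` in a monoidal category. -/
def IsMon (A : C) (eta : 𝟙_ C ⟶ A) (mu : A ⊗ A ⟶ A) : Prop :=
  (eta ▷ A) ≫ mu = (λ_ A).hom ∧ (A ◁ eta) ≫ mu = (ρ_ A).hom ∧
    (mu ▷ A) ≫ mu = (α_ A A A).hom ≫ (A ◁ mu) ≫ mu

/-- The morphism `(μ_A ⊗ Y) ∘ (A ⊗ f) : (A ⊗ X) ⊗ Z ⟶ A ⊗ Y` for `f : X ⊗ Z ⟶ A ⊗ Y`. -/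
def phi (A : C) {X Z Y : C} (mu : A ⊗ A ⟶ A) (f : X ⊗ Z ⟶ A ⊗ Y) :
    (A ⊗ X) ⊗ Z ⟶ A ⊗ Y :=
  (α_ A X Z).hom ≫ (A ◁ f) ≫ (α_ A A Y).inv ≫ (mu ▷ Y)

/-- The measuring condition `(μ_A ⊗ V) ∘ (A ⊗ ψ) ∘ (ψ ⊗ A) = ψ ∘ (V ⊗ μ_A)`. -/
def Measuring (A V : C) (mu : A ⊗ A ⟶ A) (psi : V ⊗ A ⟶ A ⊗ V) : Prop :=
  (psi ▷ A) ≫ phi A mu psi = (α_ V A A).hom ≫ (V ◁ mu) ≫ psi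

/-- The idempotent `∇_{A⊗V} = (μ_A ⊗ V) ∘ (A ⊗ ψ) ∘ (A ⊗ V ⊗ η_A)`. -/
def nabla (A V : C) (eta : 𝟙_ C ⟶ A) (mu : A ⊗ A ⟶ A) (psi : V ⊗ A ⟶ A ⊗ V) :
    A ⊗ V ⟶ A ⊗ V :=
  (ρ_ (A ⊗ V)).inv ≫ ((A ⊗ V) ◁ eta) ≫ phi A mu psi

/-- The twisted condition
`(μ_A ⊗ V) ∘ (A ⊗ ψ) ∘ (σ ⊗ A) = (μ_A ⊗ V) ∘ (A ⊗ σ) ∘ (ψ ⊗ V) ∘ (V ⊗ ψ)`. -/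
def Twisted (A V : C) (mu : A ⊗ A ⟶ A) (psi : V ⊗ A ⟶ A ⊗ V)
    (sig : V ⊗ V ⟶ A ⊗ V) : Prop :=
  (sig ▷ A) ≫ phi A mu psi =
    (α_ V V A).hom ≫ (V ◁ psi) ≫ (α_ V A V).inv ≫ (psi ▷ V) ≫ phi A mu sig

/-- The cocycle condition
`(μ_A ⊗ V) ∘ (A ⊗ σ) ∘ (σ ⊗ V) = (μ_A ⊗ V) ∘ (A ⊗ σ) ∘ (ψ ⊗ V) ∘ (V ⊗ σ)`. -/
def Cocycle (A V : C) (mu : A ⊗ A ⟶ A) (psi : V ⊗ A ⟶ A ⊗ V)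
    (sig : V ⊗ V ⟶ A ⊗ V) : Prop :=
  (sig ▷ V) ≫ phi A mu sig =
    (α_ V V V).hom ≫ (V ◁ sig) ≫ (α_ V A V).inv ≫ (psi ▷ V) ≫ phi A mu sig

/-- The weak crossed product multiplication
`μ_{A⊗V} = (μ_A ⊗ V) ∘ (μ_A ⊗ σ) ∘ (A ⊗ ψ ⊗ V)`. -/
def prodAV (A V : C) (mu : A ⊗ A ⟶ A) (psi : V ⊗ A ⟶ A ⊗ V)
    (sig : V ⊗ V ⟶ A ⊗ V) : (A ⊗ V) ⊗ (A ⊗ V) ⟶ A ⊗ V :=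
  (α_ A V (A ⊗ V)).hom ≫ (A ◁ ((α_ V A V).inv ≫ (psi ▷ V) ≫ (α_ A V V).hom)) ≫
    (α_ A A (V ⊗ V)).inv ≫ (mu ⊗ₘ sig) ≫ (α_ A A V).inv ≫ (mu ▷ V)

/-- The morphism `η_A ⊗ V : V ⟶ A ⊗ V`. -/
def etaT (A V : C) (eta : 𝟙_ C ⟶ A) : V ⟶ A ⊗ V := (λ_ V).inv ≫ (eta ▷ V)

/-- The morphism `β_ν = (μ_A ⊗ V) ∘ (A ⊗ ν) : A ⟶ A ⊗ V`. -/
def beta (A V : C) (mu : A ⊗ A ⟶ A) (nu : 𝟙_ C ⟶ A ⊗ V) : A ⟶ A ⊗ V :=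
  (ρ_ A).inv ≫ (A ◁ nu) ≫ (α_ A A V).inv ≫ (mu ▷ V)

/-- Preunit condition (pre1):
`(μ_A ⊗ V) ∘ (A ⊗ σ) ∘ (ψ ⊗ V) ∘ (V ⊗ ν) = ∇_{A⊗V} ∘ (η_A ⊗ V)`. -/
def Pre1 (A V : C) (eta : 𝟙_ C ⟶ A) (mu : A ⊗ A ⟶ A) (psi : V ⊗ A ⟶ A ⊗ V)
    (sig : V ⊗ V ⟶ A ⊗ V) (nu : 𝟙_ C ⟶ A ⊗ V) : Prop :=
  (ρ_ V).inv ≫ (V ◁ nu) ≫ (α_ V A V).inv ≫ (psi ▷ V) ≫ phi A mu sig =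
    etaT A V eta ≫ nabla A V eta mu psi

/-- Preunit condition (pre2):
`(μ_A ⊗ V) ∘ (A ⊗ σ) ∘ (ν ⊗ V) = ∇_{A⊗V} ∘ (η_A ⊗ V)`. -/
def Pre2 (A V : C) (eta : 𝟙_ C ⟶ A) (mu : A ⊗ A ⟶ A) (psi : V ⊗ A ⟶ A ⊗ V)
    (sig : V ⊗ V ⟶ A ⊗ V) (nu : 𝟙_ C ⟶ A ⊗ V) : Prop :=
  (λ_ V).inv ≫ (nu ▷ V) ≫ phi A mu sig = etaT A V eta ≫ nabla A V eta mu psi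

/-- Preunit condition (pre3): `(μ_A ⊗ V) ∘ (A ⊗ ψ) ∘ (ν ⊗ A) = β_ν`. -/
def Pre3 (A V : C) (mu : A ⊗ A ⟶ A) (psi : V ⊗ A ⟶ A ⊗ V)
    (nu : 𝟙_ C ⟶ A ⊗ V) : Prop :=
  (λ_ A).inv ≫ (nu ▷ A) ≫ phi A mu psi = beta A V mu nu

/-- `(A ⊗ V, μ_{A⊗V})` is a weak crossed product: measuring, twisted and cocycle
conditions hold and `∇_{A⊗V} ∘ σ = σ`. -/
def WCP (A V : C) (eta : 𝟙_ C ⟶ A) (mu : A ⊗ A ⟶ A) (psi : V ⊗ A ⟶ A ⊗ V)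
    (sig : V ⊗ V ⟶ A ⊗ V) : Prop :=
  Measuring A V mu psi ∧ Twisted A V mu psi sig ∧ Cocycle A V mu psi sig ∧
    sig ≫ nabla A V eta mu psi = sig

/-- `(A ⊗ V, μ_{A⊗V})` is a weak crossed product with preunit `ν`. -/
def WCPpre (A V : C) (eta : 𝟙_ C ⟶ A) (mu : A ⊗ A ⟶ A) (psi : V ⊗ A ⟶ A ⊗ V)
    (sig : V ⊗ V ⟶ A ⊗ V) (nu : 𝟙_ C ⟶ A ⊗ V) : Prop :=
  WCP A V eta mu psi sig ∧ Pre1 A V eta mu psi sig nu ∧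
    Pre2 A V eta mu psi sig nu ∧ Pre3 A V mu psi nu

/-- `(μ_A ⊗ Y) ∘ (A ⊗ γ) : A ⊗ X ⟶ A ⊗ Y` for `γ : X ⟶ A ⊗ Y`. -/
def tmap (A : C) {X Y : C} (mu : A ⊗ A ⟶ A) (g : X ⟶ A ⊗ Y) : A ⊗ X ⟶ A ⊗ Y :=
  (A ◁ g) ≫ (α_ A A Y).inv ≫ (mu ▷ Y)

/-- Left `A`-linearity of `T : A ⊗ X ⟶ A ⊗ Y`:
`T ∘ (μ_A ⊗ X) = (μ_A ⊗ Y) ∘ (A ⊗ T)`. -/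
def LeftLin (A : C) {X Y : C} (mu : A ⊗ A ⟶ A) (T : A ⊗ X ⟶ A ⊗ Y) : Prop :=
  (mu ▷ X) ≫ T = (α_ A A X).hom ≫ (A ◁ T) ≫ (α_ A A Y).inv ≫ (mu ▷ Y)

/-- `ν` is a preunit for the associative product `m` on `X`. -/
def IsPreunit {X : C} (m : X ⊗ X ⟶ X) (nu : 𝟙_ C ⟶ X) : Prop :=
  (ρ_ X).inv ≫ (X ◁ nu) ≫ m = (λ_ X).inv ≫ (nu ▷ X) ≫ m ∧
  (ρ_ X).inv ≫ (X ◁ nu) ≫ m =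
    (ρ_ X).inv ≫ (X ◁ ((λ_ (𝟙_ C)).inv ≫ (nu ⊗ₘ nu) ≫ m)) ≫ m

/-- Brzeziński normalization conditions: `ψ ∘ (η_V ⊗ A) = A ⊗ η_V`,
`ψ ∘ (V ⊗ η_A) = η_A ⊗ V`, `σ ∘ (η_V ⊗ V) = σ ∘ (V ⊗ η_V) = η_A ⊗ V`. -/
def BrzNorm (A V : C) (eta : 𝟙_ C ⟶ A) (etaV : 𝟙_ C ⟶ V) (psi : V ⊗ A ⟶ A ⊗ V)
    (sig : V ⊗ V ⟶ A ⊗ V) : Prop :=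
  (λ_ A).inv ≫ (etaV ▷ A) ≫ psi = (ρ_ A).inv ≫ (A ◁ etaV) ∧
  (ρ_ V).inv ≫ (V ◁ eta) ≫ psi = (λ_ V).inv ≫ (eta ▷ V) ∧
  (λ_ V).inv ≫ (etaV ▷ V) ≫ sig = (λ_ V).inv ≫ (eta ▷ V) ∧
  (ρ_ V).inv ≫ (V ◁ etaV) ≫ sig = (λ_ V).inv ≫ (eta ▷ V)


section Aux

variable (A : C) (eta : 𝟙_ C ⟶ A) (mu : A ⊗ A ⟶ A)

theorem tmap_etaT (hA : IsMon A eta mu) {X Y : C} (T : A ⊗ X ⟶ A ⊗ Y)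
    (hT : LeftLin A mu T) :
    tmap A mu ((λ_ X).inv ≫ (eta ▷ X) ≫ T) = T := by
  have hT' : (A ◁ T) ≫ (α_ A A Y).inv ≫ (mu ▷ Y) =
      (α_ A A X).inv ≫ (mu ▷ X) ≫ T := by
    rw [hT]; simp
  simp only [tmap, MonoidalCategory.whiskerLeft_comp, Category.assoc]
  rw [hT']
  slice_lhs 2 3 => rw [associator_inv_naturality_middle]
  slice_lhs 3 4 => rw [← comp_whiskerRight, hA.2.1]
  monoidal

theorem leftLin_comp {X Y Z : C} (T : A ⊗ X ⟶ A ⊗ Y) (S : A ⊗ Y ⟶ A ⊗ Z)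
    (hT : LeftLin A mu T) (hS : LeftLin A mu S) : LeftLin A mu (T ≫ S) := by
  simp only [LeftLin] at hT hS ⊢
  rw [← Category.assoc, hT]
  simp only [Category.assoc, hS, MonoidalCategory.whiskerLeft_comp]
  simp

theorem phi_leftLin {X Z Y : C} (hA : IsMon A eta mu) (f : X ⊗ Z ⟶ A ⊗ Y) :
    ((mu ▷ X) ▷ Z) ≫ phi A mu f =
      ((α_ A A X).hom ▷ Z) ≫ (α_ A (A ⊗ X) Z).hom ≫ (A ◁ phi A mu f) ≫
        (α_ A A Y).inv ≫ (mu ▷ Y) := by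
  simp only [phi, MonoidalCategory.whiskerLeft_comp, Category.assoc]
  slice_lhs 1 2 => rw [associator_naturality_left]
  slice_lhs 2 3 => rw [← whisker_exchange]
  slice_lhs 3 4 => rw [associator_inv_naturality_left]
  slice_lhs 4 5 => rw [← comp_whiskerRight, hA.2.2]
  slice_rhs 6 7 => rw [associator_inv_naturality_middle]
  simp only [comp_whiskerRight, Category.assoc]
  monoidal

variable (V : C) (psi : V ⊗ A ⟶ A ⊗ V) (sig : V ⊗ V ⟶ A ⊗ V) (nu : 𝟙_ C ⟶ A ⊗ V)

theorem nabla_leftLin (hA : IsMon A eta mu) : LeftLin A mu (nabla A V eta mu psi) := by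
  simp only [LeftLin, nabla, Category.assoc]
  rw [rightUnitor_inv_naturality_assoc]
  slice_lhs 2 3 => rw [← whisker_exchange]
  slice_lhs 3 4 => rw [phi_leftLin A eta mu hA]
  simp only [phi, MonoidalCategory.whiskerLeft_comp, Category.assoc]
  monoidal

theorem psi_nabla (hA : IsMon A eta mu) (hps : Measuring A V mu psi) :
    psi ≫ nabla A V eta mu psi = psi := by
  simp only [nabla]
  rw [rightUnitor_inv_naturality_assoc]
  slice_lhs 2 3 => rw [← whisker_exchange]
  slice_lhs 3 4 => rw [hps]
  slice_lhs 2 3 => rw [associator_naturality_right]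
  slice_lhs 3 4 => rw [← MonoidalCategory.whiskerLeft_comp, hA.2.1]
  monoidal

theorem nabla_eq :
    nabla A V eta mu psi =
      (A ◁ ((ρ_ V).inv ≫ (V ◁ eta) ≫ psi)) ≫ (α_ A A V).inv ≫ (mu ▷ V) := by
  simp only [nabla, phi, MonoidalCategory.whiskerLeft_comp, Category.assoc]
  monoidal

theorem phi_nabla (hA : IsMon A eta mu) (hps : Measuring A V mu psi) :
    phi A mu psi ≫ nabla A V eta mu psi = phi A mu psi := by
  simp only [phi]
  have h := nabla_leftLin A eta mu V psi hA
  simp only [LeftLin] at h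
  slice_lhs 4 5 => rw [h]
  slice_lhs 3 4 => simp only [Iso.inv_hom_id]
  simp only [Category.id_comp]
  slice_lhs 2 3 => rw [← MonoidalCategory.whiskerLeft_comp,
    psi_nabla A eta mu V psi hA hps]
  simp [Category.assoc]

theorem nabla_idem (hA : IsMon A eta mu) (hps : Measuring A V mu psi) :
    nabla A V eta mu psi ≫ nabla A V eta mu psi = nabla A V eta mu psi := by
  calc nabla A V eta mu psi ≫ nabla A V eta mu psi
      = (ρ_ (A ⊗ V)).inv ≫ ((A ⊗ V) ◁ eta) ≫
          (phi A mu psi ≫ nabla A V eta mu psi) := by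
        simp only [nabla, Category.assoc]
    _ = nabla A V eta mu psi := by
        rw [phi_nabla A eta mu V psi hA hps, nabla]

theorem nu_nabla (hA : IsMon A eta mu) (h3 : Pre3 A V mu psi nu) :
    nu ≫ nabla A V eta mu psi = nu := by
  have pre : nu ≫ (ρ_ (A ⊗ V)).inv ≫ ((A ⊗ V) ◁ eta) =
      eta ≫ (λ_ A).inv ≫ (nu ▷ A) := by
    rw [rightUnitor_inv_naturality_assoc, ← whisker_exchange,
      leftUnitor_inv_naturality_assoc, unitors_inv_equal]
  have key : nu ≫ nabla A V eta mu psi = eta ≫ beta A V mu nu := by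
    rw [← h3, nabla]
    simp only [← Category.assoc]
    congr 1
    simp only [Category.assoc]
    exact pre
  rw [key, beta, rightUnitor_inv_naturality_assoc, ← whisker_exchange_assoc]
  slice_lhs 3 4 => rw [associator_inv_naturality_left]
  slice_lhs 4 5 => rw [← comp_whiskerRight, hA.1]
  monoidal

theorem etaT_phi (hA : IsMon A eta mu) {Z Y : C} (f : V ⊗ Z ⟶ A ⊗ Y) :
    ((etaT A V eta) ▷ Z) ≫ phi A mu f = f := by
  simp only [etaT, phi, comp_whiskerRight, Category.assoc]
  slice_lhs 2 3 => rw [associator_naturality_left]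
  slice_lhs 3 4 => rw [← whisker_exchange]
  slice_lhs 4 5 => rw [associator_inv_naturality_left]
  slice_lhs 5 6 => rw [← comp_whiskerRight, hA.1]
  monoidal

theorem etaT_tmap (hA : IsMon A eta mu) {X Y : C} (g : X ⟶ A ⊗ Y) :
    etaT A X eta ≫ tmap A mu g = g := by
  simp only [etaT, tmap, Category.assoc]
  slice_lhs 2 3 => rw [← whisker_exchange]
  slice_lhs 3 4 => rw [associator_inv_naturality_left]
  slice_lhs 4 5 => rw [← comp_whiskerRight, hA.1]
  monoidal

theorem etaT_nabla (hA : IsMon A eta mu) :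
    etaT A V eta ≫ nabla A V eta mu psi = (ρ_ V).inv ≫ (V ◁ eta) ≫ psi := by
  rw [nabla_eq]
  exact etaT_tmap A eta mu hA ((ρ_ V).inv ≫ (V ◁ eta) ≫ psi)

end Aux

section Aux2

variable (A : C) (eta : 𝟙_ C ⟶ A) (mu : A ⊗ A ⟶ A)

theorem phi_phi (hA : IsMon A eta mu) {U B V' Z Y : C}
    (f : U ⊗ B ⟶ A ⊗ V') (g : V' ⊗ Z ⟶ A ⊗ Y) :
    ((phi A mu f) ▷ Z) ≫ phi A mu g =
      ((α_ A U B).hom ▷ Z) ≫ phi A mu ((f ▷ Z) ≫ phi A mu g) := by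
  simp only [phi, comp_whiskerRight, MonoidalCategory.whiskerLeft_comp,
    Category.assoc]
  slice_lhs 4 5 => rw [associator_naturality_left]
  slice_lhs 5 6 => rw [← whisker_exchange]
  slice_lhs 6 7 => rw [associator_inv_naturality_left]
  slice_lhs 7 8 => rw [← comp_whiskerRight, hA.2.2]
  slice_rhs 7 8 => rw [associator_inv_naturality_middle]
  simp only [comp_whiskerRight, Category.assoc]
  monoidal

variable (V : C) (psi : V ⊗ A ⟶ A ⊗ V) (sig : V ⊗ V ⟶ A ⊗ V) (nu : 𝟙_ C ⟶ A ⊗ V)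

theorem prodAV_eq (hA : IsMon A eta mu) :
    prodAV A V mu psi sig =
      phi A mu ((α_ V A V).inv ≫ (psi ▷ V) ≫ phi A mu sig) := by
  simp only [prodAV, phi, tensorHom_def', MonoidalCategory.whiskerLeft_comp,
    Category.assoc]
  slice_lhs 7 8 => rw [associator_inv_naturality_left]
  slice_lhs 8 9 => rw [← comp_whiskerRight, hA.2.2]
  slice_rhs 7 8 => rw [associator_inv_naturality_middle]
  simp only [comp_whiskerRight, Category.assoc]
  monoidal

theorem etaT_prodAV (hA : IsMon A eta mu) :
    (etaT A V eta ▷ (A ⊗ V)) ≫ prodAV A V mu psi sig =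
      (α_ V A V).inv ≫ (psi ▷ V) ≫ phi A mu sig := by
  rw [prodAV_eq A eta mu V psi sig hA,
    etaT_phi A eta mu V hA ((α_ V A V).inv ≫ (psi ▷ V) ≫ phi A mu sig)]

theorem eta_unit0 (hA : IsMon A eta mu) :
    (λ_ A).inv ≫ (eta ▷ A) ≫ mu = 𝟙 A := by
  rw [hA.1]; simp

theorem eta_unit (hA : IsMon A eta mu) (Z : C) :
    (λ_ (A ⊗ Z)).inv ≫ (eta ▷ (A ⊗ Z)) ≫ (α_ A A Z).inv ≫ (mu ▷ Z) =
      𝟙 (A ⊗ Z) := by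
  slice_lhs 2 3 => rw [associator_inv_naturality_left]
  slice_lhs 3 4 => rw [← comp_whiskerRight, hA.1]
  monoidal

theorem meas_phi (hA : IsMon A eta mu) (hps : Measuring A V mu psi)
    {Z₂ Y : C} (k : V ⊗ Z₂ ⟶ A ⊗ Y) :
    (psi ▷ (A ⊗ Z₂)) ≫ phi A mu ((α_ V A Z₂).inv ≫ (psi ▷ Z₂) ≫ phi A mu k) =
      (α_ V A (A ⊗ Z₂)).hom ≫ (V ◁ (α_ A A Z₂).inv) ≫ (V ◁ (mu ▷ Z₂)) ≫
        (α_ V A Z₂).inv ≫ (psi ▷ Z₂) ≫ phi A mu k := by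
  have hps' : (V ◁ mu) ≫ psi =
      (α_ V A A).inv ≫ (psi ▷ A) ≫ phi A mu psi := by rw [hps]; simp
  slice_rhs 3 4 => rw [associator_inv_naturality_middle]
  slice_rhs 4 5 => rw [← comp_whiskerRight, hps']
  simp only [comp_whiskerRight, Category.assoc]
  rw [phi_phi A eta mu hA psi k]
  simp only [phi, MonoidalCategory.whiskerLeft_comp, comp_whiskerRight,
    Category.assoc]
  monoidal

theorem nabla_phi (hA : IsMon A eta mu) (hps : Measuring A V mu psi) :
    (nabla A V eta mu psi ▷ A) ≫ phi A mu psi = phi A mu psi := by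
  conv_lhs => rw [nabla]
  simp only [comp_whiskerRight, Category.assoc]
  rw [phi_phi A eta mu hA psi psi, hps]
  calc (ρ_ (A ⊗ V)).inv ▷ A ≫ ((A ⊗ V) ◁ eta) ▷ A ≫ (α_ A V A).hom ▷ A ≫
        (α_ A (V ⊗ A) A).hom ≫
        A ◁ ((α_ V A A).hom ≫ (V ◁ mu) ≫ psi) ≫ (α_ A A V).inv ≫ mu ▷ V
      = (α_ A V A).hom ≫ (A ◁ (V ◁ ((λ_ A).inv ≫ (eta ▷ A) ≫ mu))) ≫
          (A ◁ psi) ≫ (α_ A A V).inv ≫ (mu ▷ V) := by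
        simp only [phi, MonoidalCategory.whiskerLeft_comp, Category.assoc]
        monoidal
    _ = phi A mu psi := by
        rw [eta_unit0 A eta mu hA]
        simp [phi]

theorem nabla_prodAV (hA : IsMon A eta mu) (hps : Measuring A V mu psi) :
    (nabla A V eta mu psi ▷ (A ⊗ V)) ≫ prodAV A V mu psi sig =
      prodAV A V mu psi sig := by
  rw [prodAV_eq A eta mu V psi sig hA]
  conv_lhs => rw [nabla]
  simp only [comp_whiskerRight, Category.assoc]
  rw [phi_phi A eta mu hA psi ((α_ V A V).inv ≫ (psi ▷ V) ≫ phi A mu sig)]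
  rw [meas_phi A eta mu V psi hA hps sig]
  calc (ρ_ (A ⊗ V)).inv ▷ (A ⊗ V) ≫ ((A ⊗ V) ◁ eta) ▷ (A ⊗ V) ≫
        (α_ A V A).hom ▷ (A ⊗ V) ≫
        phi A mu ((α_ V A (A ⊗ V)).hom ≫ (V ◁ (α_ A A V).inv) ≫
          (V ◁ (mu ▷ V)) ≫ (α_ V A V).inv ≫ (psi ▷ V) ≫ phi A mu sig)
      = (α_ A V (A ⊗ V)).hom ≫
          (A ◁ (V ◁ ((λ_ (A ⊗ V)).inv ≫ (eta ▷ (A ⊗ V)) ≫ (α_ A A V).inv ≫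
            (mu ▷ V)))) ≫
          (A ◁ ((α_ V A V).inv ≫ (psi ▷ V) ≫ phi A mu sig)) ≫
          (α_ A A V).inv ≫ (mu ▷ V) := by
        simp only [phi, MonoidalCategory.whiskerLeft_comp, Category.assoc]
        monoidal
    _ = phi A mu ((α_ V A V).inv ≫ (psi ▷ V) ≫ phi A mu sig) := by
        rw [eta_unit A eta mu hA V]
        simp [phi]

theorem beta_Q (hA : IsMon A eta mu) (hps : Measuring A V mu psi)
    (h1 : Pre1 A V eta mu psi sig nu) :
    (V ◁ beta A V mu nu) ≫ (α_ V A V).inv ≫ (psi ▷ V) ≫ phi A mu sig =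
      psi := by
  have hps' : (V ◁ mu) ≫ psi =
      (α_ V A A).inv ≫ (psi ▷ A) ≫ phi A mu psi := by rw [hps]; simp
  simp only [beta, MonoidalCategory.whiskerLeft_comp, Category.assoc]
  slice_lhs 4 5 => rw [associator_inv_naturality_middle]
  slice_lhs 5 6 => rw [← comp_whiskerRight, hps']
  simp only [comp_whiskerRight, Category.assoc]
  rw [phi_phi A eta mu hA psi sig]
  have h5 : (V ◁ (ρ_ A).inv) ≫ (V ◁ (A ◁ nu)) ≫ (V ◁ (α_ A A V).inv) ≫
      (α_ V (A ⊗ A) V).inv ≫ ((α_ V A A).inv ▷ V) =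
      (ρ_ (V ⊗ A)).inv ≫ ((V ⊗ A) ◁ nu) ≫ (α_ (V ⊗ A) A V).inv := by
    monoidal
  slice_lhs 1 5 => rw [h5]
  slice_lhs 3 4 => rw [← associator_inv_naturality_left]
  slice_lhs 2 3 => rw [whisker_exchange]
  slice_lhs 1 2 => rw [← rightUnitor_inv_naturality]
  have htail : (ρ_ (A ⊗ V)).inv ≫ ((A ⊗ V) ◁ nu) ≫ (α_ (A ⊗ V) A V).inv ≫
      ((α_ A V A).hom ▷ V) ≫ phi A mu ((psi ▷ V) ≫ phi A mu sig) =
      nabla A V eta mu psi := by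
    calc (ρ_ (A ⊗ V)).inv ≫ ((A ⊗ V) ◁ nu) ≫ (α_ (A ⊗ V) A V).inv ≫
        ((α_ A V A).hom ▷ V) ≫ phi A mu ((psi ▷ V) ≫ phi A mu sig)
        = (A ◁ ((ρ_ V).inv ≫ (V ◁ nu) ≫ (α_ V A V).inv ≫ (psi ▷ V) ≫
            phi A mu sig)) ≫ (α_ A A V).inv ≫ (mu ▷ V) := by
          simp only [phi, MonoidalCategory.whiskerLeft_comp, Category.assoc]
          monoidal
      _ = nabla A V eta mu psi := by
          rw [h1, etaT_nabla A eta mu V psi hA, ← nabla_eq]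
  simp only [Category.assoc]
  rw [htail]
  exact psi_nabla A eta mu V psi hA hps

theorem beta_prodAV (hA : IsMon A eta mu) (hps : Measuring A V mu psi)
    (h1 : Pre1 A V eta mu psi sig nu) :
    ((A ⊗ V) ◁ beta A V mu nu) ≫ prodAV A V mu psi sig = phi A mu psi := by
  rw [prodAV_eq A eta mu V psi sig hA]
  calc ((A ⊗ V) ◁ beta A V mu nu) ≫
        phi A mu ((α_ V A V).inv ≫ (psi ▷ V) ≫ phi A mu sig)
      = (α_ A V A).hom ≫
          (A ◁ ((V ◁ beta A V mu nu) ≫ (α_ V A V).inv ≫ (psi ▷ V) ≫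
            phi A mu sig)) ≫ (α_ A A V).inv ≫ (mu ▷ V) := by
        simp only [phi, MonoidalCategory.whiskerLeft_comp, Category.assoc]
        monoidal
    _ = phi A mu psi := by
        rw [beta_Q A eta mu V psi sig nu hA hps h1, phi]

theorem twisted_eta (hA : IsMon A eta mu) (htw : Twisted A V mu psi sig)
    (hsn : sig ≫ nabla A V eta mu psi = sig) :
    (V ◁ ((ρ_ V).inv ≫ (V ◁ eta) ≫ psi)) ≫ (α_ V A V).inv ≫ (psi ▷ V) ≫
      phi A mu sig = sig := by
  have hstep : sig ≫ (ρ_ (A ⊗ V)).inv ≫ ((A ⊗ V) ◁ eta) =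
      (ρ_ (V ⊗ V)).inv ≫ ((V ⊗ V) ◁ eta) ≫ (sig ▷ A) := by
    rw [rightUnitor_inv_naturality_assoc, ← whisker_exchange]
  conv_rhs => rw [← hsn, nabla]
  rw [reassoc_of% hstep, htw]
  simp only [MonoidalCategory.whiskerLeft_comp, Category.assoc]
  monoidal

end Aux2




/-- Theorem, (ii) ⟹ (iii): from `T`, `S` one obtains `γ`, `θ`
satisfying the structure transfer equations. -/
theorem TS_gives_gamma_theta (A V W : C) (eta : 𝟙_ C ⟶ A) (mu : A ⊗ A ⟶ A)
    (hA : IsMon A eta mu)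
    (psiV : V ⊗ A ⟶ A ⊗ V) (sigV : V ⊗ V ⟶ A ⊗ V) (nuV : 𝟙_ C ⟶ A ⊗ V)
    (psiW : W ⊗ A ⟶ A ⊗ W) (sigW : W ⊗ W ⟶ A ⊗ W) (nuW : 𝟙_ C ⟶ A ⊗ W)
    (hV : WCPpre A V eta mu psiV sigV nuV) (hW : WCPpre A W eta mu psiW sigW nuW)
    (T : A ⊗ V ⟶ A ⊗ W) (S : A ⊗ W ⟶ A ⊗ V)
    (hT : LeftLin A mu T) (hS : LeftLin A mu S)
    (hnu : nuV ≫ T = nuW)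
    (hm : prodAV A V mu psiV sigV ≫ T = (T ⊗ₘ T) ≫ prodAV A W mu psiW sigW)
    (hTS : T ≫ S = nabla A V eta mu psiV) (hST : S ≫ T = nabla A W eta mu psiW) :
    ∀ (g : V ⟶ A ⊗ W) (th : W ⟶ A ⊗ V),
      g = (λ_ V).inv ≫ (eta ▷ V) ≫ T →
      th = (λ_ W).inv ≫ (eta ▷ W) ≫ S ≫ nabla A V eta mu psiV →
      (nuV = nuW ≫ tmap A mu th ∧
       th = th ≫ nabla A V eta mu psiV ∧
       psiW = (th ▷ A) ≫ (α_ A V A).hom ≫ (A ◁ psiV) ≫ (α_ A A V).inv ≫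
         (mu ⊗ₘ g) ≫ (α_ A A W).inv ≫ (mu ▷ W) ∧
       sigW = (th ⊗ₘ th) ≫ prodAV A V mu psiV sigV ≫ tmap A mu g ∧
       g ≫ tmap A mu th = etaT A V eta ≫ nabla A V eta mu psiV) := by
  intro g th hg hth
  obtain ⟨⟨mV, twV, cyV, snV⟩, p1V, p2V, p3V⟩ := hV
  obtain ⟨⟨mW, twW, cyW, snW⟩, p1W, p2W, p3W⟩ := hW
  have hLinST : LeftLin A mu (S ≫ (T ≫ S)) :=
    leftLin_comp A mu S (T ≫ S) hS (leftLin_comp A mu T S hT hS)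
  have hLinSN : LeftLin A mu (S ≫ nabla A V eta mu psiV) := by
    rw [show S ≫ nabla A V eta mu psiV = S ≫ (T ≫ S) from by rw [hTS]]
    exact hLinST
  have hthmap : tmap A mu th = S ≫ nabla A V eta mu psiV := by
    rw [hth]
    exact tmap_etaT A eta mu hA (S ≫ nabla A V eta mu psiV) hLinSN
  have hgmap : tmap A mu g = T := by
    rw [hg]; exact tmap_etaT A eta mu hA T hT
  have hidemV := nabla_idem A eta mu V psiV hA mV
  have hidemW := nabla_idem A eta mu W psiW hA mW
  have hbT : beta A V mu nuV ≫ T = beta A W mu nuW := by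
    have hT' : (A ◁ T) ≫ (α_ A A W).inv ≫ (mu ▷ W) =
        (α_ A A V).inv ≫ (mu ▷ V) ≫ T := by rw [hT]; simp
    rw [beta, beta]
    simp only [Category.assoc]
    rw [← hT', ← MonoidalCategory.whiskerLeft_comp_assoc, hnu]
  have hRT : phi A mu psiV ≫ T = (T ▷ A) ≫ phi A mu psiW := by
    rw [← beta_prodAV A eta mu V psiV sigV nuV hA mV p1V,
      ← beta_prodAV A eta mu W psiW sigW nuW hA mW p1W]
    simp only [Category.assoc]
    rw [hm, MonoidalCategory.tensorHom_def]
    simp only [Category.assoc]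
    rw [whisker_exchange_assoc, ← MonoidalCategory.whiskerLeft_comp_assoc, hbT]
  have hthT : th ≫ T = etaT A W eta ≫ nabla A W eta mu psiW := by
    rw [hth, etaT, ← hTS]
    simp only [Category.assoc]
    rw [reassoc_of% hST, hST, hidemW]
  refine ⟨?_, ?_, ?_, ?_, ?_⟩
  · rw [hthmap, ← hnu]
    simp only [Category.assoc]
    rw [reassoc_of% hTS, hidemV, nu_nabla A eta mu V psiV nuV hA p3V]
  · rw [hth]
    simp only [Category.assoc]
    rw [hidemV]
  · calc psiW = (etaT A W eta ▷ A) ≫ phi A mu psiW :=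
        (etaT_phi A eta mu W hA psiW).symm
      _ = ((etaT A W eta ≫ nabla A W eta mu psiW) ▷ A) ≫ phi A mu psiW := by
        rw [comp_whiskerRight, Category.assoc,
          nabla_phi A eta mu W psiW hA mW]
      _ = ((th ≫ T) ▷ A) ≫ phi A mu psiW := by rw [hthT]
      _ = (th ▷ A) ≫ phi A mu psiV ≫ T := by
        rw [comp_whiskerRight, Category.assoc, hRT]
      _ = (th ▷ A) ≫ (α_ A V A).hom ≫ (A ◁ psiV) ≫ (α_ A A V).inv ≫
          (mu ⊗ₘ g) ≫ (α_ A A W).inv ≫ (mu ▷ W) := by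
        rw [← hgmap]
        simp only [phi, tmap, MonoidalCategory.tensorHom_def, Category.assoc]
  · have e4 : (th ⊗ₘ th) ≫ prodAV A V mu psiV sigV ≫ tmap A mu g = sigW := by
      rw [hgmap, hm, MonoidalCategory.tensorHom_comp_tensorHom_assoc, hthT, MonoidalCategory.tensorHom_def]
      rw [comp_whiskerRight]
      simp only [Category.assoc]
      rw [← whisker_exchange_assoc, nabla_prodAV A eta mu W psiW sigW hA mW,
        etaT_nabla A eta mu W psiW hA, ← whisker_exchange_assoc,
        etaT_prodAV A eta mu W psiW sigW hA]
      exact twisted_eta A eta mu W psiW sigW hA twW snW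
    exact e4.symm
  · rw [hthmap, hg, etaT]
    simp only [Category.assoc]
    rw [reassoc_of% hTS, hidemV]


end WeakCrossed
end

section
/- Let (A⊗V,μ_{A⊗V}) and (A⊗W,μ_{A⊗W}) be weak crossed products with preunits ν_V and ν_W, and let γ:V→A⊗W, θ:W→A⊗V be morphisms satisfying θ=∇_{A⊗V}∘θ and ψ_W=(μ_A⊗W)∘(μ_A⊗γ)∘(A⊗ψ_V)∘(θ⊗A). Then (μ_A⊗W)∘(A⊗γ)∘θ=∇_{A⊗W}∘(η_A⊗W). If moreover ν_V=(μ_A⊗V)∘(A⊗θ)∘ν_W, then ν_W=(μ_A⊗W)∘(A⊗γ)∘ν_V. -/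
open CategoryTheory MonoidalCategory

universe v u

namespace WeakCrossed

variable {C : Type u} [Category.{v} C] [MonoidalCategory C]

section Aux
variable {C : Type u} [Category.{v} C] [MonoidalCategory C]

lemma tmap_tmap (A : C) {X Y Z : C} (mu : A ⊗ A ⟶ A)
    (hassoc : (mu ▷ A) ≫ mu = (α_ A A A).hom ≫ (A ◁ mu) ≫ mu)
    (f : X ⟶ A ⊗ Y) (g : Y ⟶ A ⊗ Z) :
    tmap A mu f ≫ tmap A mu g = tmap A mu (f ≫ tmap A mu g) := by
  unfold tmap
  simp only [Category.assoc, MonoidalCategory.whiskerLeft_comp]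
  rw [← whisker_exchange_assoc, associator_inv_naturality_left_assoc,
    associator_inv_naturality_middle_assoc, ← comp_whiskerRight (mu ▷ A) mu, hassoc]
  simp only [comp_whiskerRight, Category.assoc]
  coherence

lemma etaT_nabla_s15 (A W : C) (eta : 𝟙_ C ⟶ A) (mu : A ⊗ A ⟶ A)
    (hl : (eta ▷ A) ≫ mu = (λ_ A).hom) (psiW : W ⊗ A ⟶ A ⊗ W) :
    etaT A W eta ≫ nabla A W eta mu psiW = (ρ_ W).inv ≫ (W ◁ eta) ≫ psiW := by
  unfold etaT nabla phi
  rw [rightUnitor_inv_naturality_assoc, ← whisker_exchange_assoc]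
  simp only [comp_whiskerRight, Category.assoc]
  rw [associator_naturality_left_assoc, ← whisker_exchange_assoc,
    associator_inv_naturality_left_assoc, ← comp_whiskerRight (eta ▷ A) mu, hl]
  coherence

lemma nabla_eq_tmap (A W : C) (eta : 𝟙_ C ⟶ A) (mu : A ⊗ A ⟶ A)
    (psiW : W ⊗ A ⟶ A ⊗ W) :
    nabla A W eta mu psiW = tmap A mu ((ρ_ W).inv ≫ (W ◁ eta) ≫ psiW) := by
  unfold nabla phi tmap
  simp only [MonoidalCategory.whiskerLeft_comp, Category.assoc]
  coherence

lemma nu_nabla_s15 (A W : C) (eta : 𝟙_ C ⟶ A) (mu : A ⊗ A ⟶ A)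
    (hl : (eta ▷ A) ≫ mu = (λ_ A).hom)
    (psiW : W ⊗ A ⟶ A ⊗ W) (nuW : 𝟙_ C ⟶ A ⊗ W)
    (pre3 : (λ_ A).inv ≫ (nuW ▷ A) ≫ phi A mu psiW = beta A W mu nuW) :
    nuW ≫ nabla A W eta mu psiW = nuW := by
  have h := eta ≫= pre3
  unfold beta at h
  rw [rightUnitor_inv_naturality_assoc, ← whisker_exchange_assoc,
    associator_inv_naturality_left_assoc, ← comp_whiskerRight (eta ▷ A) mu, hl] at h
  rw [leftUnitor_inv_naturality_assoc, whisker_exchange_assoc, unitors_inv_equal,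
    ← rightUnitor_inv_naturality_assoc] at h
  simp only [nabla, Category.assoc]
  rw [h]
  coherence

end Aux

/-- if `θ = ∇_{A⊗V}∘θ` and `ψ_W` is induced by `γ`, `θ`, then
`(μ_A⊗W)∘(A⊗γ)∘θ = ∇_{A⊗W}∘(η_A⊗W)`; and if moreover
`ν_V = (μ_A⊗V)∘(A⊗θ)∘ν_W` then `ν_W = (μ_A⊗W)∘(A⊗γ)∘ν_V`. -/
theorem gamma_theta_aux (A V W : C) (eta : 𝟙_ C ⟶ A) (mu : A ⊗ A ⟶ A)
    (hA : IsMon A eta mu)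
    (psiV : V ⊗ A ⟶ A ⊗ V) (sigV : V ⊗ V ⟶ A ⊗ V) (nuV : 𝟙_ C ⟶ A ⊗ V)
    (psiW : W ⊗ A ⟶ A ⊗ W) (sigW : W ⊗ W ⟶ A ⊗ W) (nuW : 𝟙_ C ⟶ A ⊗ W)
    (hV : WCPpre A V eta mu psiV sigV nuV) (hW : WCPpre A W eta mu psiW sigW nuW)
    (g : V ⟶ A ⊗ W) (th : W ⟶ A ⊗ V)
    (h2 : th = th ≫ nabla A V eta mu psiV)
    (h3 : psiW = (th ▷ A) ≫ (α_ A V A).hom ≫ (A ◁ psiV) ≫ (α_ A A V).inv ≫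
      (mu ⊗ₘ g) ≫ (α_ A A W).inv ≫ (mu ▷ W)) :
    th ≫ tmap A mu g = etaT A W eta ≫ nabla A W eta mu psiW ∧
    (nuV = nuW ≫ tmap A mu th → nuW = nuV ≫ tmap A mu g) := by
  obtain ⟨hl, hr, hassoc⟩ := hA
  have pre3 : (λ_ A).inv ≫ (nuW ▷ A) ≫ phi A mu psiW = beta A W mu nuW := hW.2.2.2
  have goal1 : th ≫ tmap A mu g = etaT A W eta ≫ nabla A W eta mu psiW := by
    rw [etaT_nabla_s15 A W eta mu hl, h3, whisker_exchange_assoc,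
      ← rightUnitor_inv_naturality_assoc, tensorHom_def mu g]
    conv_lhs => rw [h2]
    simp only [nabla, phi, tmap, Category.assoc]
  refine ⟨goal1, fun hnu => ?_⟩
  rw [hnu, Category.assoc, tmap_tmap A mu hassoc, goal1, etaT_nabla_s15 A W eta mu hl,
    ← nabla_eq_tmap, nu_nabla_s15 A W eta mu hl psiW nuW pre3]


end WeakCrossed
end
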